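/- Let X be a standard Borel space and D a locally countable Borel directed graph on X in which every vertex has at most n out-neighbors. Then the Borel chromatic number of the underlying graph of D is either infinite or at most (n+1)(n+2)/2. -/

import Mathlib

open Set

namespace PalamourdasAux

lemma tri_succ (s : ℕ) : (s + 1) * (s + 2) / 2 = s * (s + 1) / 2 + (s + 1) := by
  obtain ⟨t, ht⟩ := Nat.even_mul_succ_self s
  have h2 : (s + 1) * (s + 2) = s * (s + 1) + 2 * (s + 1) := by ring
  omega

lemma tri_mono {a b : ℕ} (h : a ≤ b) : a * (a + 1) / 2 ≤ b * (b + 1) / 2 :=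
  Nat.div_le_div_right (Nat.mul_le_mul h (by omega))

/-- Cantor-style triangular encoding. -/
def enc (i j : ℕ) : ℕ := (i + j) * (i + j + 1) / 2 + i

lemma enc_lt {n i j : ℕ} (h : i + j ≤ n) : enc i j < (n + 1) * (n + 2) / 2 := by
  have h1 : (i + j) * (i + j + 1) / 2 ≤ n * (n + 1) / 2 := tri_mono h
  have h2 := tri_succ n
  have h3 : i ≤ n := le_trans (Nat.le_add_right _ _) h
  unfold enc; omega

lemma enc_inj {i j i' j' : ℕ} (he : enc i j = enc i' j') : i = i' ∧ j = j' := by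
  have key : ∀ a b a' b' : ℕ, a + b < a' + b' → enc a b < enc a' b' := by
    intro a b a' b' h
    have h1 : enc a b < (a + b + 1) * (a + b + 2) / 2 := by
      have := tri_succ (a + b); unfold enc; omega
    have h2 : (a + b + 1) * (a + b + 2) / 2 ≤ (a' + b') * (a' + b' + 1) / 2 := tri_mono h
    have h3 : (a' + b') * (a' + b' + 1) / 2 ≤ enc a' b' := Nat.le_add_right _ _
    omega
  have hs : i + j = i' + j' := by
    rcases lt_trichotomy (i + j) (i' + j') with h | h | h
    · exact absurd he (ne_of_lt (key _ _ _ _ h))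
    · exact h
    · exact absurd he.symm (ne_of_lt (key _ _ _ _ h))
  unfold enc at he
  rw [hs] at he
  omega

lemma pigeon {n b : ℕ} (P : Fin n → Prop) [DecidablePred P] (g : Fin n → ℕ)
    (hb : (Finset.univ.filter P).card ≤ b) :
    ∃ r ≤ b, ∀ m, P m → g m ≠ r := by
  have hcard : ((Finset.univ.filter P).image g).card ≤ b :=
    le_trans Finset.card_image_le hb
  have hns : ¬ (Finset.range (b + 1) ⊆ (Finset.univ.filter P).image g) := by
    intro hsub
    have := Finset.card_le_card hsub
    simp only [Finset.card_range] at this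
    omega
  obtain ⟨r, hr1, hr2⟩ := Finset.not_subset.mp hns
  exact ⟨r, Nat.lt_succ_iff.mp (Finset.mem_range.mp hr1),
    fun m hm hg => hr2 (Finset.mem_image.mpr ⟨m, Finset.mem_filter.mpr ⟨Finset.mem_univ m, hm⟩, hg⟩)⟩

lemma nat_sInf_eq {S : Set ℕ} {r : ℕ} :
    sInf S = r ↔ ((r ∈ S ∧ ∀ r' < r, r' ∉ S) ∨ (r = 0 ∧ ∀ r', r' ∉ S)) := by
  constructor
  · rintro rfl
    by_cases hS : S.Nonempty
    · exact Or.inl ⟨Nat.sInf_mem hS, fun r' h => Nat.notMem_of_lt_sInf h⟩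
    · rw [Set.not_nonempty_iff_eq_empty] at hS
      refine Or.inr ⟨by rw [hS, Nat.sInf_empty], by rw [hS]; simp⟩
  · rintro (⟨h1, h2⟩ | ⟨rfl, h⟩)
    · refine le_antisymm (Nat.sInf_le h1) ?_
      by_contra hlt
      push_neg at hlt
      exact h2 _ hlt (Nat.sInf_mem ⟨r, h1⟩)
    · rw [Set.eq_empty_iff_forall_notMem.mpr h, Nat.sInf_empty]



noncomputable def greedy {n : ℕ} (f : Fin n → Y → Y) (cond : Fin n → Y → Prop) : ℕ → Y → ℕ
  | 0, _ => 0
  | t + 1, x => sInf {r | ∀ m, cond m x → greedy f cond t (f m x) ≠ r}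

lemma greedy_stab {n : ℕ} (f : Fin n → Y → Y) (cond : Fin n → Y → Prop)
    (rk : Y → ℕ) (hrk : ∀ m x, cond m x → rk (f m x) < rk x) :
    ∀ (d : ℕ) (x : Y), rk x < d → ∀ t₁ t₂, rk x < t₁ → rk x < t₂ →
      greedy f cond t₁ x = greedy f cond t₂ x := by
  intro d
  induction d using Nat.strong_induction_on with
  | _ d ih =>
    intro x hxd t₁ t₂ h1 h2
    obtain ⟨a, rfl⟩ : ∃ a, t₁ = a + 1 := ⟨t₁ - 1, by omega⟩
    obtain ⟨b, rfl⟩ : ∃ b, t₂ = b + 1 := ⟨t₂ - 1, by omega⟩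
    simp only [greedy]
    congr 1
    ext r
    simp only [Set.mem_setOf_eq]
    refine forall_congr' fun m => imp_congr_right fun hm => ?_
    have hlt := hrk m x hm
    rw [ih (rk x) hxd (f m x) hlt a b (by omega) (by omega)]

lemma greedy_spec {n : ℕ} (f : Fin n → Y → Y) (cond : Fin n → Y → Prop)
    (rk : Y → ℕ) (hrk : ∀ m x, cond m x → rk (f m x) < rk x)
    (K : ℕ) (x : Y) (hx : rk x < K) :
    greedy f cond K x = sInf {r | ∀ m, cond m x → greedy f cond K (f m x) ≠ r} := by
  have h1 : greedy f cond K x = greedy f cond (K + 1) x :=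
    greedy_stab f cond rk hrk (rk x + 1) x (by omega) K (K + 1) hx (by omega)
  rw [h1]
  simp only [greedy]

lemma greedy_measurable [MeasurableSpace Y] {n : ℕ} (f : Fin n → Y → Y) (cond : Fin n → Y → Prop)
    (hf : ∀ m, Measurable (f m)) (hcond : ∀ m, MeasurableSet {x | cond m x}) :
    ∀ t, Measurable (greedy f cond t) := by
  intro t
  induction t with
  | zero => simpa [greedy] using measurable_const
  | succ t ih =>
    have hmem : ∀ r : ℕ, MeasurableSet {x | ∀ m, cond m x → greedy f cond t (f m x) ≠ r} := by
      intro r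
      have heq : {x | ∀ m, cond m x → greedy f cond t (f m x) ≠ r}
          = ⋂ m, ({x | cond m x} ∩ (fun x => greedy f cond t (f m x)) ⁻¹' {r})ᶜ := by
        ext x
        simp [not_and]
      rw [heq]
      exact MeasurableSet.iInter fun m =>
        ((hcond m).inter ((ih.comp (hf m)) (measurableSet_singleton r))).compl
    apply measurable_to_countable'
    intro r
    have heq : (greedy f cond (t + 1)) ⁻¹' {r} =
        (({x | ∀ m, cond m x → greedy f cond t (f m x) ≠ r} ∩
          ⋂ (r' : ℕ), ⋂ (_ : r' < r), {x | ∀ m, cond m x → greedy f cond t (f m x) ≠ r'}ᶜ) ∪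
         (if r = 0 then ⋂ (r' : ℕ), {x | ∀ m, cond m x → greedy f cond t (f m x) ≠ r'}ᶜ
          else ∅)) := by
      ext x
      simp only [mem_preimage, mem_singleton_iff, greedy, mem_union, mem_inter_iff,
        mem_iInter, mem_compl_iff, mem_setOf_eq]
      rw [nat_sInf_eq]
      by_cases hr : r = 0 <;> simp [hr, Set.mem_setOf_eq]
    rw [heq]
    refine ((hmem r).inter (MeasurableSet.iInter fun r' =>
      MeasurableSet.iInter fun _ => (hmem r').compl)).union ?_
    split_ifs
    · exact MeasurableSet.iInter fun r' => (hmem r').compl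
    · exact MeasurableSet.empty

lemma core {Y : Type*} [MeasurableSpace Y] {n k : ℕ} (E : Set (Y × Y))
    (s : Fin n → Set Y) (f : Fin n → Y → Y)
    (hsm : ∀ m, MeasurableSet (s m)) (hfm : ∀ m, Measurable (f m))
    (hiff : ∀ x y, ((x, y) ∈ E ↔ ∃ m, x ∈ s m ∧ y = f m x))
    (c : Y → Fin k) (hcm : Measurable c)
    (hcp : ∀ x y, (x, y) ∈ E → c x ≠ c y) :
    ∃ cc : Y → Fin ((n + 1) * (n + 2) / 2), Measurable cc ∧
      ∀ x y, (x, y) ∈ E → cc x ≠ cc y := by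
  classical
  set condI : Fin n → Y → Prop := fun m x => x ∈ s m ∧ c x < c (f m x) with hcondI_def
  set i : Y → ℕ := greedy f condI k with hi_def
  set rkI : Y → ℕ := fun x => k - 1 - (c x).val with hrkI_def
  have hrkI : ∀ m x, condI m x → rkI (f m x) < rkI x := by
    rintro m x ⟨_, hlt⟩
    have h1 : (c x).val < (c (f m x)).val := hlt
    have h2 := (c (f m x)).isLt
    simp only [hrkI_def]
    omega
  have hi_spec : ∀ x, i x = sInf {r | ∀ m, condI m x → i (f m x) ≠ r} := fun x =>
    greedy_spec f condI rkI hrkI k x (by have := (c x).isLt; simp only [hrkI_def]; omega)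
  -- pigeonhole for i
  have hi_le : ∀ x, i x ≤ n ∧ (∀ m, condI m x → i (f m x) ≠ i x) := by
    intro x
    obtain ⟨r, hr, hrS⟩ := pigeon (b := n) (fun m => condI m x) (fun m => i (f m x))
      (le_trans (Finset.card_filter_le _ _) (by simp))
    have hrmem : r ∈ {r | ∀ m, condI m x → i (f m x) ≠ r} := hrS
    constructor
    · rw [hi_spec x]
      exact le_trans (Nat.sInf_le hrmem) hr
    · have : i x ∈ {r | ∀ m, condI m x → i (f m x) ≠ r} := by
        rw [hi_spec x]
        exact Nat.sInf_mem ⟨r, hrmem⟩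
      exact this
  have hi_min : ∀ x r, r < i x → ∃ m, condI m x ∧ i (f m x) = r := by
    intro x r hr
    rw [hi_spec x] at hr
    have := Nat.notMem_of_lt_sInf hr
    simp only [mem_setOf_eq] at this
    push_neg at this
    exact this
  set condJ : Fin n → Y → Prop :=
    fun m x => x ∈ s m ∧ c (f m x) < c x ∧ i (f m x) = i x with hcondJ_def
  set j : Y → ℕ := greedy f condJ k with hj_def
  have hrkJ : ∀ m x, condJ m x → (fun x => (c x).val) (f m x) < (fun x => (c x).val) x := by
    rintro m x ⟨_, hlt, _⟩
    exact hlt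
  have hj_spec : ∀ x, j x = sInf {r | ∀ m, condJ m x → j (f m x) ≠ r} := fun x =>
    greedy_spec f condJ (fun x => (c x).val) hrkJ k x (c x).isLt
  -- cardinality: number of condJ-indices is at most n - i x
  have hcardJ : ∀ x, (Finset.univ.filter fun m => condJ m x).card ≤ n - i x := by
    intro x
    by_cases hix : i x = 0
    · have h1 := Finset.card_filter_le (Finset.univ : Finset (Fin n)) (fun m => condJ m x)
      have h2 : (Finset.univ : Finset (Fin n)).card = n := by simp
      omega
    · have hwit : ∀ r, r < i x → ∃ m, condI m x ∧ i (f m x) = r := fun r hr => hi_min x r hr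
      have hm0 : Fin n → Prop := fun _ => True
      obtain ⟨m₀, hm₀, _⟩ := hwit 0 (Nat.pos_of_ne_zero hix)
      set ψ : ℕ → Fin n := fun r => if h : r < i x then (hwit r h).choose else m₀ with hψ_def
      have hψA : ∀ r ∈ Finset.range (i x), ψ r ∈ Finset.univ.filter fun m => condI m x := by
        intro r hr
        rw [Finset.mem_range] at hr
        simp only [hψ_def, dif_pos hr]
        exact Finset.mem_filter.mpr ⟨Finset.mem_univ _, ((hwit r hr).choose_spec).1⟩
      have hψinj : Set.InjOn ψ (Finset.range (i x)) := by
        intro r1 h1 r2 h2 he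
        rw [Finset.coe_range, Set.mem_Iio] at h1 h2
        have e1 : i (f (ψ r1) x) = r1 := by
          simp only [hψ_def, dif_pos h1]
          exact ((hwit r1 h1).choose_spec).2
        have e2 : i (f (ψ r2) x) = r2 := by
          simp only [hψ_def, dif_pos h2]
          exact ((hwit r2 h2).choose_spec).2
        rw [← e1, ← e2, he]
      have hA : i x ≤ (Finset.univ.filter fun m => condI m x).card := by
        have := Finset.card_le_card_of_injOn ψ hψA hψinj
        simpa using this
      have hdisj : Disjoint (Finset.univ.filter fun m => condI m x)
          (Finset.univ.filter fun m => condJ m x) := by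
        rw [Finset.disjoint_left]
        intro m hmI hmJ
        obtain ⟨_, hI⟩ := Finset.mem_filter.mp hmI
        obtain ⟨_, hJ⟩ := Finset.mem_filter.mp hmJ
        exact absurd hJ.2.1 (not_lt.mpr (le_of_lt hI.2))
      have hunion := Finset.card_union_of_disjoint hdisj
      have hle : ((Finset.univ.filter fun m => condI m x) ∪
          (Finset.univ.filter fun m => condJ m x)).card ≤ n := by
        refine le_trans (Finset.card_le_card (Finset.subset_univ _)) (by simp)
      omega
  have hj_le : ∀ x, j x ≤ n - i x ∧ (∀ m, condJ m x → j (f m x) ≠ j x) := by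
    intro x
    obtain ⟨r, hr, hrS⟩ := pigeon (fun m => condJ m x) (fun m => j (f m x)) (hcardJ x)
    have hrmem : r ∈ {r | ∀ m, condJ m x → j (f m x) ≠ r} := hrS
    constructor
    · rw [hj_spec x]
      exact le_trans (Nat.sInf_le hrmem) hr
    · have : j x ∈ {r | ∀ m, condJ m x → j (f m x) ≠ r} := by
        rw [hj_spec x]
        exact Nat.sInf_mem ⟨r, hrmem⟩
      exact this
  have hsum : ∀ x, i x + j x ≤ n := by
    intro x
    have h1 := (hi_le x).1
    have h2 := (hj_le x).1
    omega
  -- measurability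
  have hcondIm : ∀ m, MeasurableSet {x | condI m x} := by
    intro m
    have h1 : MeasurableSet {x | c x < c (f m x)} := by
      have hmap : Measurable fun x => (c x, c (f m x)) := hcm.prodMk (hcm.comp (hfm m))
      have : {x | c x < c (f m x)} = (fun x => (c x, c (f m x))) ⁻¹' {p | p.1 < p.2} := rfl
      rw [this]
      exact hmap ((Set.to_countable _).measurableSet)
    exact (hsm m).inter h1
  have hi_meas : Measurable i := greedy_measurable f condI hfm hcondIm k
  have hcondJm : ∀ m, MeasurableSet {x | condJ m x} := by
    intro m
    have h1 : MeasurableSet {x | c (f m x) < c x} := by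
      have hmap : Measurable fun x => (c (f m x), c x) := (hcm.comp (hfm m)).prodMk hcm
      have : {x | c (f m x) < c x} = (fun x => (c (f m x), c x)) ⁻¹' {p | p.1 < p.2} := rfl
      rw [this]
      exact hmap ((Set.to_countable _).measurableSet)
    have h2 : MeasurableSet {x | i (f m x) = i x} := by
      have hmap : Measurable fun x => (i (f m x), i x) := (hi_meas.comp (hfm m)).prodMk hi_meas
      have : {x | i (f m x) = i x} = (fun x => (i (f m x), i x)) ⁻¹' {p | p.1 = p.2} := rfl
      rw [this]
      exact hmap ((Set.to_countable _).measurableSet)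
    exact (hsm m).inter (h1.inter h2)
  have hj_meas : Measurable j := greedy_measurable f condJ hfm hcondJm k
  -- edge distinctness of the pair
  have hpair : ∀ x y, (x, y) ∈ E → (i x ≠ i y ∨ j x ≠ j y) := by
    intro x y hxy
    obtain ⟨m, hms, hmf⟩ := (hiff x y).mp hxy
    have hne := hcp x y hxy
    rcases lt_trichotomy (c x) (c y) with hlt | heq | hlt
    · left
      have := (hi_le x).2 m ⟨hms, by rw [← hmf]; exact hlt⟩
      rw [hmf]
      exact fun he => this (by rw [← he])
    · exact absurd heq hne
    · by_cases hieq : i x = i y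
      · right
        have := (hj_le x).2 m ⟨hms, by rw [← hmf]; exact hlt, by rw [← hmf]; exact hieq.symm⟩
        rw [hmf]
        exact fun he => this (by rw [← he])
      · exact Or.inl hieq
  -- final coloring
  refine ⟨fun x => ⟨enc (i x) (j x), enc_lt (hsum x)⟩, ?_, ?_⟩
  · apply measurable_to_countable'
    intro v
    have heq : (fun x => (⟨enc (i x) (j x), enc_lt (hsum x)⟩ : Fin ((n + 1) * (n + 2) / 2)))
        ⁻¹' {v} = (fun x => enc (i x) (j x)) ⁻¹' {v.val} := by
      ext x
      simp [Fin.ext_iff]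
    rw [heq]
    have hmap : Measurable fun x => enc (i x) (j x) := by
      have h1 : Measurable fun x => (i x, j x) := hi_meas.prodMk hj_meas
      have h2 : Measurable fun p : ℕ × ℕ => enc p.1 p.2 := measurable_of_countable _
      exact h2.comp h1
    exact hmap (measurableSet_singleton _)
  · intro x y hxy he
    have hv : enc (i x) (j x) = enc (i y) (j y) := by
      simpa [Fin.ext_iff] using he
    obtain ⟨h1, h2⟩ := enc_inj hv
    rcases hpair x y hxy with h | h
    · exact h h1
    · exact h h2



theorem decomp : ∀ (n : ℕ) (X : Type) (mX : MeasurableSpace X), StandardBorelSpace X →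
    ∀ (D : Set (X × ℝ)), MeasurableSet D → (∀ x, {y | (x, y) ∈ D}.Finite) →
    (∀ x, {y | (x, y) ∈ D}.ncard ≤ n) →
    ∃ (s : Fin n → Set X) (f : Fin n → X → ℝ),
      (∀ m, MeasurableSet (s m)) ∧ (∀ m, Measurable (f m)) ∧
      (∀ x y, ((x, y) ∈ D ↔ ∃ m, x ∈ s m ∧ y = f m x)) := by
  intro n
  induction n with
  | zero =>
    intro X mX hsb D hD hfin hcard
    refine ⟨Fin.elim0, Fin.elim0, fun m => m.elim0, fun m => m.elim0, fun x y => ?_⟩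
    constructor
    · intro h
      have h0 : {y' | (x, y') ∈ D}.ncard = 0 := le_antisymm (hcard x) (Nat.zero_le _)
      have hemp : {y' | (x, y') ∈ D} = ∅ := (Set.ncard_eq_zero (hfin x)).mp h0
      have hy : y ∈ {y' | (x, y') ∈ D} := h
      rw [hemp] at hy
      exact hy.elim
    · rintro ⟨m, _⟩
      exact m.elim0
  | succ n IH =>
    intro X mX hsb D hD hfin hcard
    haveI := hsb
    classical
    set U : Set ((X × ℝ) × ℝ) := {p | p.1 ∈ D ∧ (p.1.1, p.2) ∈ D ∧ p.1.2 < p.2} with hU_def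
    have hU : MeasurableSet U := by
      have m1 : MeasurableSet {p : (X × ℝ) × ℝ | p.1 ∈ D} := measurable_fst hD
      have m2 : MeasurableSet {p : (X × ℝ) × ℝ | (p.1.1, p.2) ∈ D} :=
        (measurable_fst.fst.prodMk measurable_snd) hD
      have m3 : MeasurableSet {p : (X × ℝ) × ℝ | p.1.2 < p.2} :=
        measurableSet_lt measurable_fst.snd measurable_snd
      exact m1.inter (m2.inter m3)
    have hUfin : ∀ q : X × ℝ, {y' | (q, y') ∈ U}.Finite := by
      intro q
      refine (hfin q.1).subset ?_
      rintro y' ⟨_, h2, _⟩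
      exact h2
    have hUcard : ∀ q : X × ℝ, {y' | (q, y') ∈ U}.ncard ≤ n := by
      intro q
      by_cases hq : q ∈ D
      · have hq' : q.2 ∈ {y | (q.1, y) ∈ D} := by
          show (q.1, q.2) ∈ D
          rwa [Prod.mk.eta]
        have hsub : {y' | (q, y') ∈ U} ⊆ {y | (q.1, y) ∈ D} \ {q.2} := by
          rintro y' ⟨_, h2, h3⟩
          refine ⟨h2, fun he => ?_⟩
          rw [mem_singleton_iff] at he
          subst he
          exact lt_irrefl _ h3
        have h1 : ({y | (q.1, y) ∈ D} \ {q.2}).ncard = {y | (q.1, y) ∈ D}.ncard - 1 :=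
          Set.ncard_diff_singleton_of_mem hq'
        have h2 : {y' | (q, y') ∈ U}.ncard ≤ ({y | (q.1, y) ∈ D} \ {q.2}).ncard :=
          Set.ncard_le_ncard hsub (hfin q.1).diff
        have h3 := hcard q.1
        have h4 : 0 < {y | (q.1, y) ∈ D}.ncard :=
          (Set.ncard_pos (hfin q.1)).mpr ⟨q.2, hq'⟩
        omega
      · have hemp : {y' | (q, y') ∈ U} = ∅ := by
          ext y'
          simp only [mem_setOf_eq, mem_empty_iff_false, iff_false]
          rintro ⟨h1, _, _⟩
          exact hq h1
        simp [hemp]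
    obtain ⟨s', f', hs'm, hf'm, hU_iff⟩ := IH (X × ℝ) inferInstance inferInstance U hU hUfin hUcard
    set T : Set (X × ℝ) := ⋃ m, s' m with hT_def
    have hT_iff : ∀ q : X × ℝ, q ∈ T ↔ ∃ y', (q, y') ∈ U := by
      intro q
      simp only [hT_def, mem_iUnion]
      constructor
      · rintro ⟨m, hm⟩
        exact ⟨f' m q, (hU_iff q _).mpr ⟨m, hm, rfl⟩⟩
      · rintro ⟨y', hy'⟩
        obtain ⟨m, hm, _⟩ := (hU_iff q y').mp hy'
        exact ⟨m, hm⟩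
    have hT : MeasurableSet T := MeasurableSet.iUnion fun m => hs'm m
    set Dm : Set (X × ℝ) := D \ T with hDm_def
    have hDmMeas : MeasurableSet Dm := hD.diff hT
    have hDm_iff : ∀ x y, ((x, y) ∈ Dm ↔ (x, y) ∈ D ∧ ∀ y', (x, y') ∈ D → y' ≤ y) := by
      intro x y
      constructor
      · rintro ⟨h1, h2⟩
        refine ⟨h1, fun y' hy' => ?_⟩
        by_contra hlt
        push_neg at hlt
        exact h2 ((hT_iff (x, y)).mpr ⟨y', ⟨h1, hy', hlt⟩⟩)
      · rintro ⟨h1, h2⟩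
        refine ⟨h1, fun hmem => ?_⟩
        obtain ⟨y', _, hy'D, hlt⟩ := (hT_iff (x, y)).mp hmem
        exact absurd (h2 y' hy'D) (not_le.mpr hlt)
    have hDm_unique : ∀ x y₁ y₂, (x, y₁) ∈ Dm → (x, y₂) ∈ Dm → y₁ = y₂ := by
      intro x y₁ y₂ h1 h2
      obtain ⟨hd1, hm1⟩ := (hDm_iff x y₁).mp h1
      obtain ⟨hd2, hm2⟩ := (hDm_iff x y₂).mp h2
      exact le_antisymm (hm2 y₁ hd1) (hm1 y₂ hd2)
    have hInj : Set.InjOn Prod.fst Dm := by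
      rintro ⟨x1, y1⟩ h1 ⟨x2, y2⟩ h2 h
      simp only at h
      subst h
      exact Prod.ext rfl (hDm_unique x1 y1 y2 h1 h2)
    set s0 : Set X := Prod.fst '' Dm with hs0_def
    have hs0 : MeasurableSet s0 := hDmMeas.image_of_measurable_injOn measurable_fst hInj
    set f0 : X → ℝ := fun x => if h : ∃ y, (x, y) ∈ Dm then h.choose else 0 with hf0_def
    have hf0_spec : ∀ x, x ∈ s0 → (x, f0 x) ∈ Dm := by
      intro x hx
      obtain ⟨p, hp, hpx⟩ := hx
      have hex : ∃ y, (x, y) ∈ Dm := ⟨p.2, by rw [← hpx, Prod.mk.eta]; exact hp⟩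
      simp only [hf0_def, dif_pos hex]
      exact hex.choose_spec
    have hf0_eq : ∀ x y, (x, y) ∈ Dm → f0 x = y := fun x y h =>
      hDm_unique x _ _ (hf0_spec x ⟨(x, y), h, rfl⟩) h
    have hf0m : Measurable f0 := by
      intro B hB
      have himg : MeasurableSet (Prod.fst '' (Dm ∩ {p : X × ℝ | p.2 ∈ B})) :=
        (hDmMeas.inter (measurable_snd hB)).image_of_measurable_injOn measurable_fst
          (hInj.mono inter_subset_left)
      have heq : f0 ⁻¹' B = (Prod.fst '' (Dm ∩ {p : X × ℝ | p.2 ∈ B})) ∪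
          (if (0 : ℝ) ∈ B then s0ᶜ else ∅) := by
        ext x
        by_cases hex : ∃ y, (x, y) ∈ Dm
        · have hxs0 : x ∈ s0 := ⟨(x, hex.choose), hex.choose_spec, rfl⟩
          have hf0x : (x, f0 x) ∈ Dm := hf0_spec x hxs0
          simp only [mem_preimage, mem_union]
          constructor
          · intro hfB
            exact Or.inl ⟨(x, f0 x), ⟨hf0x, hfB⟩, rfl⟩
          · rintro (⟨p, ⟨hpD, hpB⟩, rfl⟩ | hr)
            · have hpe : f0 p.1 = p.2 := hf0_eq p.1 p.2 (by rwa [Prod.mk.eta])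
              rwa [hpe]
            · split_ifs at hr with h0
              · exact absurd hxs0 hr
              · exact hr.elim
        · have hxns0 : x ∉ s0 := by
            rintro ⟨p, hp, rfl⟩
            exact hex ⟨p.2, by rwa [Prod.mk.eta]⟩
          have hf0x : f0 x = 0 := by simp [hf0_def, dif_neg hex]
          simp only [mem_preimage, hf0x, mem_union]
          constructor
          · intro h0B
            right
            rw [if_pos h0B]
            exact hxns0
          · rintro (⟨p, ⟨hpD, _⟩, rfl⟩ | hr)
            · exact absurd ⟨p.2, by rwa [Prod.mk.eta]⟩ hex
            · split_ifs at hr with h0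
              · exact h0
              · exact hr.elim
      rw [heq]
      refine himg.union ?_
      split_ifs
      · exact hs0.compl
      · exact MeasurableSet.empty
    have hTsubD : ∀ x y, (x, y) ∈ T → (x, y) ∈ D := by
      intro x y hy
      obtain ⟨y', h1, _, _⟩ := (hT_iff (x, y)).mp hy
      exact h1
    have hTfin : ∀ x, {y | (x, y) ∈ T}.Finite := fun x =>
      (hfin x).subset fun y hy => hTsubD x y hy
    have hTcard : ∀ x, {y | (x, y) ∈ T}.ncard ≤ n := by
      intro x
      by_cases hne : ∃ y, (x, y) ∈ D
      · have hx0 : x ∈ s0 := by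
          obtain ⟨y0, hy0⟩ := hne
          obtain ⟨b, hbS, hb⟩ := Set.exists_max_image {y | (x, y) ∈ D} id (hfin x) ⟨y0, hy0⟩
          exact ⟨(x, b), (hDm_iff x b).mpr ⟨hbS, fun y' hy' => hb y' hy'⟩, rfl⟩
        have hfmem : f0 x ∈ {y | (x, y) ∈ D} := ((hDm_iff x (f0 x)).mp (hf0_spec x hx0)).1
        have hsub : {y | (x, y) ∈ T} ⊆ {y | (x, y) ∈ D} \ {f0 x} := by
          intro y hy
          refine ⟨hTsubD x y hy, fun hyf => ?_⟩
          have hyDm : (x, y) ∈ Dm := by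
            have : y = f0 x := hyf
            rw [this]
            exact hf0_spec x hx0
          exact hyDm.2 hy
        have h1 : ({y | (x, y) ∈ D} \ {f0 x}).ncard = {y | (x, y) ∈ D}.ncard - 1 :=
          Set.ncard_diff_singleton_of_mem hfmem
        have h2 : {y | (x, y) ∈ T}.ncard ≤ ({y | (x, y) ∈ D} \ {f0 x}).ncard :=
          Set.ncard_le_ncard hsub (hfin x).diff
        have h3 := hcard x
        have h4 : 0 < {y | (x, y) ∈ D}.ncard := (Set.ncard_pos (hfin x)).mpr ⟨f0 x, hfmem⟩
        omega
      · have hemp : {y | (x, y) ∈ T} = ∅ := by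
          ext y
          simp only [mem_setOf_eq, mem_empty_iff_false, iff_false]
          intro hy
          exact hne ⟨y, hTsubD x y hy⟩
        simp [hemp]
    obtain ⟨s1, f1, hs1m, hf1m, hT_dec⟩ := IH X mX hsb T hT hTfin hTcard
    refine ⟨Fin.cons s0 s1, Fin.cons f0 f1, ?_, ?_, ?_⟩
    · intro m
      refine Fin.cases ?_ ?_ m
      · simpa using hs0
      · intro i
        simpa using hs1m i
    · intro m
      refine Fin.cases ?_ ?_ m
      · simpa using hf0m
      · intro i
        simpa using hf1m i
    · intro x y
      constructor
      · intro hD_mem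
        by_cases hm : (x, y) ∈ Dm
        · refine ⟨0, ?_, ?_⟩
          · simpa using ⟨(x, y), hm, rfl⟩
          · simpa using (hf0_eq x y hm).symm
        · have hxT : (x, y) ∈ T := by
            by_contra hnT
            exact hm ⟨hD_mem, hnT⟩
          obtain ⟨m, hm1, hm2⟩ := (hT_dec x y).mp hxT
          refine ⟨m.succ, ?_, ?_⟩
          · simpa using hm1
          · simpa using hm2
      · rintro ⟨m, hm1, hm2⟩
        induction m using Fin.cases with
        | zero =>
          simp only [Fin.cons_zero] at hm1 hm2
          rw [hm2]
          exact ((hDm_iff x (f0 x)).mp (hf0_spec x hm1)).1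
        | succ i =>
          simp only [Fin.cons_succ] at hm1 hm2
          exact hTsubD x y ((hT_dec x y).mpr ⟨i, hm1, hm2⟩)


end PalamourdasAux


/-- **Theorem (Palamourdas' bound).** Let `X` be a standard Borel space and `D` a locally
countable Borel directed graph on `X` in which every vertex has at most `n` out-neighbors.
Then the Borel chromatic number of the underlying graph of `D` is either infinite or at
most `(n+1)(n+2)/2`; that is, if it is finite then there is a Borel proper coloring with
`(n+1)(n+2)/2` colors. -/
theorem borel_chromatic_of_bounded_outdegree {X : Type*} [MeasurableSpace X]
    [StandardBorelSpace X] (n : ℕ)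
    (D : Set (X × X)) (hDmeas : MeasurableSet D)
    (hirr : ∀ x : X, (x, x) ∉ D)
    (hloc : ∀ x : X, {y | (x, y) ∈ D}.Countable ∧ {y | (y, x) ∈ D}.Countable)
    (hdeg : ∀ x : X, {y | (x, y) ∈ D}.Finite ∧ {y | (x, y) ∈ D}.ncard ≤ n)
    (hfin : ∃ k : ℕ, ∃ c : X → Fin k, Measurable c ∧
      ∀ x y : X, ((x, y) ∈ D ∨ (y, x) ∈ D) → c x ≠ c y) :
    ∃ c : X → Fin ((n + 1) * (n + 2) / 2), Measurable c ∧
      ∀ x y : X, ((x, y) ∈ D ∨ (y, x) ∈ D) → c x ≠ c y := by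
  classical
  obtain ⟨k0, c0, hc0m, hc0p⟩ := hfin
  obtain ⟨φ, hφ⟩ := MeasureTheory.exists_measurableEmbedding_real X
  set c1 : X → Fin (k0 + 1) := fun x => (c0 x).castSucc with hc1_def
  have hc1m : Measurable c1 := (measurable_of_countable _).comp hc0m
  have hc1p : ∀ x y, ((x, y) ∈ D ∨ (y, x) ∈ D) → c1 x ≠ c1 y := fun x y h hc =>
    hc0p x y h (Fin.castSucc_injective _ hc)
  set emb2 : X × X → ℝ × ℝ := fun p => (φ p.1, φ p.2) with hemb2_def
  have hemb2 : MeasurableEmbedding emb2 := hφ.prodMap hφ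
  set E : Set (ℝ × ℝ) := emb2 '' D with hE_def
  have hE : MeasurableSet E := hemb2.measurableSet_image' hDmeas
  set c' : ℝ → Fin (k0 + 1) := Function.extend φ c1 (fun _ => 0) with hc'_def
  have hc'm : Measurable c' := hφ.measurable_extend hc1m measurable_const
  have hc'φ : ∀ x, c' (φ x) = c1 x := fun x => hφ.injective.extend_apply _ _ _
  have hEmem : ∀ x y : X, (x, y) ∈ D → (φ x, φ y) ∈ E := fun x y h => ⟨(x, y), h, rfl⟩
  have hE_elim : ∀ u v, (u, v) ∈ E → ∃ x y, (x, y) ∈ D ∧ u = φ x ∧ v = φ y := by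
    rintro u v ⟨⟨x, y⟩, hxy, heq⟩
    have h1 : φ x = u := congrArg Prod.fst heq
    have h2 : φ y = v := congrArg Prod.snd heq
    exact ⟨x, y, hxy, h1.symm, h2.symm⟩
  have hEp : ∀ u v, (u, v) ∈ E → c' u ≠ c' v := by
    intro u v hE'
    obtain ⟨x, y, hxy, rfl, rfl⟩ := hE_elim u v hE'
    rw [hc'φ, hc'φ]
    exact hc1p x y (Or.inl hxy)
  have hEfin : ∀ u, {v | (u, v) ∈ E}.Finite ∧ {v | (u, v) ∈ E}.ncard ≤ n := by
    intro u
    by_cases hu : ∃ x, φ x = u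
    · obtain ⟨x, rfl⟩ := hu
      have hsec : {v | (φ x, v) ∈ E} = φ '' {y | (x, y) ∈ D} := by
        ext v
        constructor
        · intro hv
          obtain ⟨x', y', hxy, hux, hvy⟩ := hE_elim _ _ hv
          have hxx : x' = x := hφ.injective hux.symm
          subst hxx
          exact ⟨y', hxy, hvy.symm⟩
        · rintro ⟨y, hy, rfl⟩
          exact hEmem x y hy
      rw [hsec]
      exact ⟨((hdeg x).1).image φ,
        by rw [Set.ncard_image_of_injective _ hφ.injective]; exact (hdeg x).2⟩
    · have hemp : {v | (u, v) ∈ E} = ∅ := by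
        ext v
        simp only [Set.mem_setOf_eq, Set.mem_empty_iff_false, iff_false]
        intro hv
        obtain ⟨x, y, _, hux, _⟩ := hE_elim _ _ hv
        exact hu ⟨x, hux.symm⟩
      simp [hemp]
  obtain ⟨s, f, hsm, hfm, hiff⟩ := PalamourdasAux.decomp n ℝ _ inferInstance E hE
    (fun u => (hEfin u).1) (fun u => (hEfin u).2)
  obtain ⟨cc, hccm, hccp⟩ := PalamourdasAux.core E s f hsm hfm hiff c' hc'm hEp
  refine ⟨fun x => cc (φ x), hccm.comp hφ.measurable, ?_⟩
  intro x y hxy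
  rcases hxy with h | h
  · exact hccp _ _ (hEmem x y h)
  · exact (hccp _ _ (hEmem y x h)).symm
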